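/- Let q be a closed, lower-bounded symmetric quadratic form with ground state energy E = inf{q(Ψ,Ψ) : ‖Ψ‖ = 1, Ψ ∈ Q(q)}. Suppose that for every normalized sequence {Ψ^j} ⊂ Q(q) converging weakly to 0 in the underlying Hilbert space, liminf_j q(Ψ^j, Ψ^j) > E holds. Then E is an eigenvalue of the self-adjoint operator associated with q (i.e., a ground state exists). -/

import Mathlib

open Filter

lemma discrim_aux {a b c : ℝ} (h : ∀ t : ℝ, 0 ≤ a + 2 * t * b + t ^ 2 * c) :
    b ^ 2 ≤ a * c := by
  have ha : 0 ≤ a := by simpa using h 0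
  have hc : 0 ≤ c := by
    by_contra hc
    push_neg at hc
    have hcne : c ≠ 0 := ne_of_lt hc
    set s := Real.sqrt ((a + 1) / (-c)) with hs
    have hs2 : s ^ 2 = (a + 1) / (-c) := Real.sq_sqrt (by apply div_nonneg <;> linarith)
    have h1 := h s
    have h2 := h (-s)
    have hsc : s ^ 2 * c = -(a + 1) := by
      rw [hs2, div_neg, neg_mul, div_mul_cancel₀ _ hcne]
    nlinarith
  rcases eq_or_lt_of_le hc with hc0 | hcpos
  · have hb : b = 0 := by
      by_contra hb
      have h1 := h (-(a + 1) / (2 * b))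
      rw [← hc0] at h1
      have : 2 * (-(a + 1) / (2 * b)) * b = -(a + 1) := by field_simp
      nlinarith
    rw [hb, ← hc0]; nlinarith
  · have h1 := h (-b / c)
    have h2 : (-b / c) * c = -b := by field_simp
    have h3 : (-b / c) ^ 2 * c = b ^ 2 / c := by field_simp
    nlinarith [mul_pos hcpos hcpos]

lemma weak_compact_hilbert {H : Type*} [NormedAddCommGroup H] [InnerProductSpace ℂ H]
    [CompleteSpace H] (x : ℕ → H) (hx : ∀ j, ‖x j‖ ≤ 1) :
    ∃ g : ℕ → ℕ, StrictMono g ∧ ∃ z : H, ‖z‖ ≤ 1 ∧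
      ∀ φ : H, Tendsto (fun k => (inner ℂ φ (x (g k)) : ℂ)) atTop (nhds (inner ℂ φ z)) := by
  -- Step 1: diagonal extraction via sequential compactness of a product of closed balls
  set F : ℕ → ℕ → ℂ := fun k n => inner ℂ (x n) (x k) with hF
  have hFmem : ∀ k, F k ∈ Set.univ.pi (fun _ : ℕ => Metric.closedBall (0 : ℂ) 1) := by
    intro k n _
    simp only [Metric.mem_closedBall, dist_zero_right]
    calc ‖(inner ℂ (x n) (x k) : ℂ)‖ ≤ ‖x n‖ * ‖x k‖ := norm_inner_le_norm _ _
      _ ≤ 1 := by nlinarith [hx n, hx k, norm_nonneg (x n), norm_nonneg (x k)]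
  have hcpt : IsCompact (Set.univ.pi (fun _ : ℕ => Metric.closedBall (0 : ℂ) 1)) :=
    isCompact_univ_pi fun _ => isCompact_closedBall _ _
  obtain ⟨L, -, g, hg, hgL⟩ := hcpt.isSeqCompact hFmem
  have hptwise : ∀ n, Tendsto (fun k => (inner ℂ (x n) (x (g k)) : ℂ)) atTop (nhds (L n)) :=
    fun n => tendsto_pi_nhds.mp hgL n
  set X : ℕ → H := fun k => x (g k) with hX
  have hXle : ∀ k, ‖X k‖ ≤ 1 := fun k => hx _
  -- Step 2: convergence on the span
  have hspan : ∀ y ∈ Submodule.span ℂ (Set.range x),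
      ∃ l : ℂ, Tendsto (fun k => (inner ℂ y (X k) : ℂ)) atTop (nhds l) := by
    intro y hy
    induction hy using Submodule.span_induction with
    | mem y hy => obtain ⟨n, rfl⟩ := hy; exact ⟨L n, hptwise n⟩
    | zero => exact ⟨0, by simpa [inner_zero_left] using (tendsto_const_nhds : Tendsto (fun _ : ℕ => (0:ℂ)) atTop (nhds 0))⟩
    | add u v _ _ hu hv =>
      obtain ⟨lu, hlu⟩ := hu; obtain ⟨lv, hlv⟩ := hv
      exact ⟨lu + lv, by simpa [inner_add_left] using hlu.add hlv⟩
    | smul c u _ hu =>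
      obtain ⟨lu, hlu⟩ := hu
      exact ⟨starRingEnd ℂ c * lu, by simpa [inner_smul_left, mul_comm] using hlu.const_mul (starRingEnd ℂ c)⟩
  -- Step 3: convergence on the closure of the span
  have hclos : ∀ y ∈ closure ((Submodule.span ℂ (Set.range x) : Submodule ℂ H) : Set H),
      ∃ l : ℂ, Tendsto (fun k => (inner ℂ y (X k) : ℂ)) atTop (nhds l) := by
    intro y hy
    refine cauchySeq_tendsto_of_complete ?_
    rw [Metric.cauchySeq_iff]
    intro ε hε
    obtain ⟨w, hw, hdist⟩ := Metric.mem_closure_iff.mp hy (ε / 4) (by linarith)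
    obtain ⟨l, hl⟩ := hspan w hw
    obtain ⟨N, hN⟩ := Metric.cauchySeq_iff.mp hl.cauchySeq (ε / 2) (by linarith)
    refine ⟨N, fun m hm n hn => ?_⟩
    have key : ∀ k, dist (inner ℂ y (X k) : ℂ) (inner ℂ w (X k) : ℂ) ≤ ε / 4 := by
      intro k
      rw [dist_eq_norm, ← inner_sub_left]
      calc ‖(inner ℂ (y - w) (X k) : ℂ)‖ ≤ ‖y - w‖ * ‖X k‖ := norm_inner_le_norm _ _
        _ ≤ ε / 4 * 1 := by
            refine mul_le_mul ?_ (hXle k) (norm_nonneg _) (by linarith)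
            rw [← dist_eq_norm]; exact le_of_lt hdist
        _ = ε / 4 := by ring
    calc dist (inner ℂ y (X m) : ℂ) (inner ℂ y (X n) : ℂ)
        ≤ dist (inner ℂ y (X m) : ℂ) (inner ℂ w (X m) : ℂ)
          + dist (inner ℂ w (X m) : ℂ) (inner ℂ w (X n) : ℂ)
          + dist (inner ℂ w (X n) : ℂ) (inner ℂ y (X n) : ℂ) := dist_triangle4 _ _ _ _
      _ < ε / 4 + ε / 2 + ε / 4 := by
          have h3 : dist (inner ℂ w (X n) : ℂ) (inner ℂ y (X n) : ℂ) ≤ ε / 4 := by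
            rw [dist_comm]; exact key n
          linarith [key m, hN m hm n hn]
      _ = ε := by ring
  -- Step 4: convergence for every vector, via orthogonal projection
  set K := (Submodule.span ℂ (Set.range x)).topologicalClosure with hK
  haveI : CompleteSpace K :=
    (Submodule.span ℂ (Set.range x)).isClosed_topologicalClosure.completeSpace_coe
  have hXK : ∀ k, X k ∈ K :=
    fun k => Submodule.le_topologicalClosure _ (Submodule.subset_span (Set.mem_range_self _))
  have hall : ∀ y : H, ∃ l : ℂ, Tendsto (fun k => (inner ℂ y (X k) : ℂ)) atTop (nhds l) := by
    intro y
    have heq : ∀ k, (inner ℂ y (X k) : ℂ) = inner ℂ (↑(K.orthogonalProjectionOnto y) : H) (X k) := by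
      intro k
      have h0 : (inner ℂ (y - ↑(K.orthogonalProjectionOnto y)) (X k) : ℂ) = 0 :=
        Submodule.inner_left_of_mem_orthogonal (hXK k) (K.sub_starProjection_mem_orthogonal y)
      rw [inner_sub_left, sub_eq_zero] at h0
      exact h0
    have hmem : (↑(K.orthogonalProjectionOnto y) : H) ∈
        closure ((Submodule.span ℂ (Set.range x) : Submodule ℂ H) : Set H) := by
      rw [← Submodule.topologicalClosure_coe]
      exact (K.orthogonalProjectionOnto y).2
    obtain ⟨l, hl⟩ := hclos _ hmem
    exact ⟨l, by simpa only [← heq] using hl⟩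
  -- Step 5: the limit functional and Riesz representation
  choose l hl using hall
  have hadd : ∀ u v, l (u + v) = l u + l v := fun u v =>
    tendsto_nhds_unique (hl (u + v)) (by simpa [inner_add_left] using (hl u).add (hl v))
  have hsmul : ∀ (c : ℂ) u, l (c • u) = starRingEnd ℂ c * l u := fun c u =>
    tendsto_nhds_unique (hl (c • u))
      (by simpa [inner_smul_left, mul_comm] using (hl u).const_mul (starRingEnd ℂ c))
  have hbound : ∀ u, ‖l u‖ ≤ ‖u‖ := by
    intro u
    refine le_of_tendsto (hl u).norm ?_
    filter_upwards with k
    calc ‖(inner ℂ u (X k) : ℂ)‖ ≤ ‖u‖ * ‖X k‖ := norm_inner_le_norm _ _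
      _ ≤ ‖u‖ * 1 := mul_le_mul_of_nonneg_left (hXle k) (norm_nonneg _)
      _ = ‖u‖ := mul_one _
  let f : H →ₗ[ℂ] ℂ :=
    { toFun := fun u => starRingEnd ℂ (l u)
      map_add' := fun u v => by
        show starRingEnd ℂ (l (u + v)) = starRingEnd ℂ (l u) + starRingEnd ℂ (l v)
        rw [hadd, map_add]
      map_smul' := fun c u => by
        show starRingEnd ℂ (l (c • u)) = (RingHom.id ℂ) c • starRingEnd ℂ (l u)
        simp [hsmul] }
  let Fc : H →L[ℂ] ℂ := f.mkContinuous 1 (fun u => by simpa [f] using hbound u)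
  set z := (InnerProductSpace.toDual ℂ H).symm Fc with hzdef
  have hzy : ∀ y : H, (inner ℂ y z : ℂ) = l y := by
    intro y
    have h1 : (inner ℂ z y : ℂ) = Fc y := InnerProductSpace.toDual_symm_apply
    calc (inner ℂ y z : ℂ) = starRingEnd ℂ (inner ℂ z y : ℂ) := (inner_conj_symm _ _).symm
      _ = starRingEnd ℂ (Fc y) := by rw [h1]
      _ = l y := by simp [Fc, f]
  have hzn : ‖z‖ ≤ 1 := by
    have h1 : (inner ℂ z z : ℂ) = l z := hzy z
    have h2 : ‖(inner ℂ z z : ℂ)‖ = ‖z‖ ^ 2 := by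
      rw [inner_self_eq_norm_sq_to_K]
      simp [sq_abs]
    have := hbound z
    rw [← h1, h2] at this
    nlinarith [norm_nonneg z]
  exact ⟨g, hg, z, hzn, fun φ => by rw [hzy]; exact hl φ⟩

/-- Existence of a ground state from the weak lower-semicontinuity gap: if `q` is a
closed, lower-bounded symmetric quadratic form with ground state energy
`E = inf {q(Ψ,Ψ) : Ψ ∈ Q(q), ‖Ψ‖ = 1}`, and every normalized sequence in the form
domain converging weakly to `0` in `H` satisfies `liminf q(Ψʲ,Ψʲ) > E`, then the
infimum is attained: there is a normalized `Φ` in the form domain with `q(Φ,Φ) = E`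
(i.e. `E` is an eigenvalue of the associated self-adjoint operator). -/
theorem stmt_19 {H : Type*} [NormedAddCommGroup H] [InnerProductSpace ℂ H]
    [CompleteSpace H]
    (D : Submodule ℂ H) (hdense : Dense (D : Set H))
    (q : H → H → ℝ) (E : ℝ)
    (hsymm : ∀ x y, q x y = q y x)
    (haddl : ∀ x y z, q (x + y) z = q x z + q y z)
    (hsmull : ∀ (r : ℝ) (x y : H), q ((r : ℂ) • x) y = r * q x y)
    (hlb : ∃ c : ℝ, ∀ x ∈ D, c * ‖x‖ ^ 2 ≤ q x x)
    (hE : IsGLB {r : ℝ | ∃ Ψ ∈ D, ‖Ψ‖ = 1 ∧ q Ψ Ψ = r} E)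
    (hclosed : ∀ (Ψ : ℕ → H) (Ψlim : H), (∀ i, Ψ i ∈ D) →
        Tendsto Ψ atTop (nhds Ψlim) →
        (∀ ε > 0, ∃ N, ∀ i ≥ N, ∀ j ≥ N, q (Ψ i - Ψ j) (Ψ i - Ψ j) < ε) →
        Ψlim ∈ D ∧ Tendsto (fun i => q (Ψ i - Ψlim) (Ψ i - Ψlim)) atTop (nhds 0))
    (hweak : ∀ Ψ : ℕ → H, (∀ j, Ψ j ∈ D) → (∀ j, ‖Ψ j‖ = 1) →
        (∀ φ : H, Tendsto (fun j => (inner ℂ φ (Ψ j) : ℂ)) atTop (nhds 0)) →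
        E < liminf (fun j => q (Ψ j) (Ψ j)) atTop) :
    ∃ Φ, Φ ∈ D ∧ ‖Φ‖ = 1 ∧ q Φ Φ = E := by
  -- basic algebra of q
  have hq0l : ∀ y, q 0 y = 0 := fun y => by
    have h := hsmull 0 0 y; simpa using h
  have haddr : ∀ x y z, q x (y + z) = q x y + q x z := fun x y z => by
    rw [hsymm, haddl, hsymm y x, hsymm z x]
  have hsmulr : ∀ (r : ℝ) (x y : H), q x ((r : ℂ) • y) = r * q x y := fun r x y => by
    rw [hsymm, hsmull, hsymm]
  have hnegl : ∀ x y, q (-x) y = - q x y := fun x y => by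
    have h := hsmull (-1) x y
    simpa using h
  have hsubl : ∀ x y z, q (x - y) z = q x z - q y z := fun x y z => by
    rw [sub_eq_add_neg, haddl, hnegl]; ring
  have hsubr : ∀ x y z, q x (y - z) = q x y - q x z := fun x y z => by
    rw [hsymm, hsubl, hsymm y x, hsymm z x]
  -- real part of inner ℂ product
  have hre_self : ∀ v : H, (inner ℂ v v : ℂ).re = ‖v‖ ^ 2 := fun v => by
    rw [inner_self_eq_norm_sq_to_K]
    simp [← Complex.ofReal_pow]
  have hre_symm : ∀ u v : H, (inner ℂ u v : ℂ).re = (inner ℂ v u : ℂ).re := fun u v => by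
    rw [← inner_conj_symm]; exact Complex.conj_re _
  have hre_addl : ∀ u v w : H, (inner ℂ (u + v) w : ℂ).re = (inner ℂ u w : ℂ).re + (inner ℂ v w : ℂ).re :=
    fun u v w => by rw [inner_add_left]; simp
  have hre_addr : ∀ u v w : H, (inner ℂ u (v + w) : ℂ).re = (inner ℂ u v : ℂ).re + (inner ℂ u w : ℂ).re :=
    fun u v w => by rw [inner_add_right]; simp
  have hre_smull : ∀ (t : ℝ) (u v : H),
      (inner ℂ ((t : ℂ) • u) v : ℂ).re = t * (inner ℂ u v : ℂ).re := fun t u v => by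
    rw [inner_smul_left]; simp
  have hre_smulr : ∀ (t : ℝ) (u v : H),
      (inner ℂ u ((t : ℂ) • v) : ℂ).re = t * (inner ℂ u v : ℂ).re := fun t u v => by
    rw [inner_smul_right]; simp
  have hre_subl : ∀ u v w : H, (inner ℂ (u - v) w : ℂ).re = (inner ℂ u w : ℂ).re - (inner ℂ v w : ℂ).re :=
    fun u v w => by rw [inner_sub_left]; simp
  have hre_subr : ∀ u v w : H, (inner ℂ u (v - w) : ℂ).re = (inner ℂ u v : ℂ).re - (inner ℂ u w : ℂ).re :=
    fun u v w => by rw [inner_sub_right]; simp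
  -- E is a lower bound in quadratic form
  have hqE : ∀ x, x ∈ D → E * ‖x‖ ^ 2 ≤ q x x := by
    intro x hxD
    rcases eq_or_ne x 0 with rfl | hx0
    · simp [hq0l]
    · have hn : (0:ℝ) < ‖x‖ := norm_pos_iff.mpr hx0
      set u := ((‖x‖⁻¹ : ℝ) : ℂ) • x with hu
      have huD : u ∈ D := D.smul_mem _ hxD
      have hun : ‖u‖ = 1 := by
        rw [hu, norm_smul]
        simp [abs_of_nonneg (le_of_lt (inv_pos.mpr hn)), inv_mul_cancel₀ (ne_of_gt hn)]
      have hq : q u u = ‖x‖⁻¹ * (‖x‖⁻¹ * q x x) := by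
        rw [hu, hsmull, hsmulr]
      have hge : E ≤ q u u := hE.1 ⟨u, huD, hun, rfl⟩
      rw [hq] at hge
      have h2 : E * ‖x‖ ^ 2 ≤ ‖x‖⁻¹ * (‖x‖⁻¹ * q x x) * ‖x‖ ^ 2 := by
        nlinarith [sq_nonneg ‖x‖]
      calc E * ‖x‖ ^ 2 ≤ ‖x‖⁻¹ * (‖x‖⁻¹ * q x x) * ‖x‖ ^ 2 := h2
        _ = q x x := by field_simp
  -- the auxiliary nonnegative form B
  set B : H → H → ℝ := fun u v => q u v - E * (inner ℂ u v : ℂ).re with hBdef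
  have hBsymm : ∀ u v, B u v = B v u := fun u v => by
    simp only [hBdef]; rw [hsymm, hre_symm]
  have hBaddl : ∀ u v w, B (u + v) w = B u w + B v w := fun u v w => by
    simp only [hBdef]; rw [haddl, hre_addl]; ring
  have hBaddr : ∀ u v w, B u (v + w) = B u v + B u w := fun u v w => by
    simp only [hBdef]; rw [haddr, hre_addr]; ring
  have hBsmull : ∀ (t : ℝ) u v, B ((t : ℂ) • u) v = t * B u v := fun t u v => by
    simp only [hBdef]; rw [hsmull, hre_smull]; ring
  have hBsmulr : ∀ (t : ℝ) u v, B u ((t : ℂ) • v) = t * B u v := fun t u v => by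
    rw [hBsymm, hBsmull, hBsymm]
  have hBsubl : ∀ u v w, B (u - v) w = B u w - B v w := fun u v w => by
    simp only [hBdef]; rw [hsubl, hre_subl]; ring
  have hBsubr : ∀ u v w, B u (v - w) = B u v - B u w := fun u v w => by
    simp only [hBdef]; rw [hsubr, hre_subr]; ring
  have hBq : ∀ u v, q u v = B u v + E * (inner ℂ u v : ℂ).re := fun u v => by
    simp only [hBdef]; ring
  have hBqq : ∀ u, q u u = B u u + E * ‖u‖ ^ 2 := fun u => by
    rw [hBq, hre_self]
  have hBpos : ∀ u, u ∈ D → 0 ≤ B u u := fun u hu => by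
    have := hqE u hu
    simp only [hBdef, hre_self]
    linarith
  -- Cauchy–Schwarz for B on D
  have hBCS : ∀ u, u ∈ D → ∀ v, v ∈ D → (B u v) ^ 2 ≤ B u u * B v v := by
    intro u hu v hv
    apply discrim_aux
    intro t
    have hmem : u + (t : ℂ) • v ∈ D := D.add_mem hu (D.smul_mem _ hv)
    have hexp : B (u + (t : ℂ) • v) (u + (t : ℂ) • v)
        = B u u + 2 * t * B u v + t ^ 2 * B v v := by
      rw [hBaddl, hBaddr, hBaddr]
      simp only [hBsmull, hBsmulr]
      rw [hBsymm v u]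
      ring
    rw [← hexp]
    exact hBpos _ hmem
  -- bound for B on pairs with small diagonal
  have hBoff : ∀ u, u ∈ D → ∀ v, v ∈ D → ∀ δ : ℝ, 0 ≤ δ → B u u ≤ δ → B v v ≤ δ →
      |B u v| ≤ δ := by
    intro u hu v hv δ hδ h1 h2
    have hcs := hBCS u hu v hv
    have h3 : B u v ^ 2 ≤ δ ^ 2 := by nlinarith [hBpos u hu, hBpos v hv]
    exact abs_le_of_sq_le_sq h3 hδ
  -- minimizing sequence
  have hex : ∀ j : ℕ, ∃ Ψ, Ψ ∈ D ∧ ‖Ψ‖ = 1 ∧ q Ψ Ψ < E + 1 / (j + 1) := by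
    intro j
    by_contra hcon
    push_neg at hcon
    have hlb2 : E + 1 / (j + 1 : ℝ) ≤ E := by
      apply hE.2
      rintro r ⟨Ψ, hΨD, hΨn, rfl⟩
      exact hcon Ψ hΨD hΨn
    have : (0 : ℝ) < 1 / (j + 1 : ℝ) := by positivity
    linarith
  choose Φ hΦD hΦn hΦq using hex
  have hΦE : ∀ j, E ≤ q (Φ j) (Φ j) := fun j => hE.1 ⟨Φ j, hΦD j, hΦn j, rfl⟩
  have hqtend : Tendsto (fun j => q (Φ j) (Φ j)) atTop (nhds E) := by
    have hup : Tendsto (fun j : ℕ => E + 1 / (j + 1 : ℝ)) atTop (nhds E) := by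
      have h0 := tendsto_one_div_add_atTop_nhds_zero_nat (𝕜 := ℝ)
      simpa using (tendsto_const_nhds (x := E)).add h0
    exact tendsto_of_tendsto_of_tendsto_of_le_of_le tendsto_const_nhds hup hΦE
      (fun j => le_of_lt (hΦq j))
  -- weak limit of a subsequence
  obtain ⟨g, hg, z, hzle, hWC⟩ := weak_compact_hilbert Φ (fun j => le_of_eq (hΦn j))
  set X : ℕ → H := fun k => Φ (g k) with hXdef
  have hXD : ∀ k, X k ∈ D := fun k => hΦD (g k)
  have hXn : ∀ k, ‖X k‖ = 1 := fun k => hΦn (g k)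
  have hXq : Tendsto (fun k => q (X k) (X k)) atTop (nhds E) := by
    have := hqtend.comp hg.tendsto_atTop
    simpa [Function.comp_def] using this
  have hXB : Tendsto (fun k => B (X k) (X k)) atTop (nhds 0) := by
    have hid : ∀ k, B (X k) (X k) = q (X k) (X k) - E := by
      intro k
      have h := hBqq (X k)
      rw [hXn k] at h
      simp at h
      linarith
    simp only [hid]
    simpa using hXq.sub (tendsto_const_nhds (x := E))
  have hXB0 : ∀ k, 0 ≤ B (X k) (X k) := fun k => hBpos _ (hXD k)
  have hWCX : ∀ φ : H, Tendsto (fun k => (inner ℂ φ (X k) : ℂ)) atTop (nhds (inner ℂ φ z)) := hWC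
  have h2 : Tendsto (fun n => (inner ℂ (X n) z : ℂ)) atTop (nhds ((‖z‖ : ℂ) ^ 2)) := by
    have hconj : Tendsto (fun k => (starRingEnd ℂ) (inner ℂ z (X k) : ℂ)) atTop
        (nhds ((starRingEnd ℂ) (inner ℂ z z : ℂ))) :=
      (Complex.continuous_conj.tendsto ((inner ℂ z z : ℂ))).comp (hWCX z)
    have heq : ∀ k, (starRingEnd ℂ) (inner ℂ z (X k) : ℂ) = (inner ℂ (X k) z : ℂ) :=
      fun k => inner_conj_symm _ _
    have heq2 : (starRingEnd ℂ) (inner ℂ z z : ℂ) = ((‖z‖ : ℂ)) ^ 2 := by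
      rw [inner_conj_symm, inner_self_eq_norm_sq_to_K]
      norm_cast
    rw [← heq2]
    exact hconj.congr heq
  set α : ℝ := 1 - ‖z‖ ^ 2 with hαdef
  have hα0 : 0 ≤ α := by
    rw [hαdef]
    nlinarith [norm_nonneg z]
  -- selection of pairs
  have hpair : ∀ k : ℕ, ∃ n m : ℕ, k ≤ n ∧ k ≤ m ∧
      B (X n) (X n) < 1 / (k + 1) ∧ B (X m) (X m) < 1 / (k + 1) ∧
      ‖(inner ℂ (X n) (X m) : ℂ) - ((‖z‖ : ℂ)) ^ 2‖ < 2 / (k + 1) := by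
    intro k
    have hδ : (0 : ℝ) < 1 / (k + 1 : ℝ) := by positivity
    obtain ⟨N1, hN1⟩ := Metric.tendsto_atTop.mp h2 (1 / (k + 1 : ℝ)) hδ
    obtain ⟨N2, hN2⟩ := Metric.tendsto_atTop.mp hXB (1 / (k + 1 : ℝ)) hδ
    set n := max k (max N1 N2) with hn
    obtain ⟨M1, hM1⟩ := Metric.tendsto_atTop.mp (hWCX (X n)) (1 / (k + 1 : ℝ)) hδ
    set m := max k (max M1 N2) with hm
    have hnN1 : N1 ≤ n := le_trans (le_max_left N1 N2) (le_max_right k (max N1 N2))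
    have hnN2 : N2 ≤ n := le_trans (le_max_right N1 N2) (le_max_right k (max N1 N2))
    have hmM1 : M1 ≤ m := le_trans (le_max_left M1 N2) (le_max_right k (max M1 N2))
    have hmN2 : N2 ≤ m := le_trans (le_max_right M1 N2) (le_max_right k (max M1 N2))
    refine ⟨n, m, le_max_left _ _, le_max_left _ _, ?_, ?_, ?_⟩
    · have := hN2 n hnN2
      rw [Real.dist_eq, sub_zero, abs_of_nonneg (hXB0 n)] at this
      exact this
    · have := hN2 m hmN2
      rw [Real.dist_eq, sub_zero, abs_of_nonneg (hXB0 m)] at this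
      exact this
    · have ha := hM1 m hmM1
      have hb := hN1 n hnN1
      rw [dist_eq_norm] at ha hb
      calc ‖(inner ℂ (X n) (X m) : ℂ) - ((‖z‖ : ℂ)) ^ 2‖
          ≤ ‖(inner ℂ (X n) (X m) : ℂ) - (inner ℂ (X n) z : ℂ)‖
            + ‖(inner ℂ (X n) z : ℂ) - ((‖z‖ : ℂ)) ^ 2‖ := by
            have := norm_sub_le ((inner ℂ (X n) (X m) : ℂ) - (inner ℂ (X n) z : ℂ))
              (((‖z‖ : ℂ)) ^ 2 - (inner ℂ (X n) z : ℂ))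
            calc ‖(inner ℂ (X n) (X m) : ℂ) - ((‖z‖ : ℂ)) ^ 2‖
                = ‖((inner ℂ (X n) (X m) : ℂ) - (inner ℂ (X n) z : ℂ))
                  - (((‖z‖ : ℂ)) ^ 2 - (inner ℂ (X n) z : ℂ))‖ := by ring_nf
              _ ≤ _ := by
                  refine le_trans (norm_sub_le _ _) ?_
                  rw [norm_sub_rev ((‖z‖ : ℂ) ^ 2)]
          _ < 1 / (k + 1) + 1 / (k + 1) := add_lt_add ha hb
          _ = 2 / (k + 1) := by ring
  choose nf mf hnfk hmfk hBn hBm hnm using hpair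
  set ζ : ℕ → H := fun k => X (nf k) - X (mf k) with hζdef
  have hζD : ∀ k, ζ k ∈ D := fun k => D.sub_mem (hXD _) (hXD _)
  have hnf_tend : Tendsto nf atTop atTop := tendsto_atTop_mono hnfk tendsto_id
  have hmf_tend : Tendsto mf atTop atTop := tendsto_atTop_mono hmfk tendsto_id
  have hone : Tendsto (fun k : ℕ => 1 / (k + 1 : ℝ)) atTop (nhds 0) :=
    tendsto_one_div_add_atTop_nhds_zero_nat
  have hζweak : ∀ φ : H, Tendsto (fun k => (inner ℂ φ (ζ k) : ℂ)) atTop (nhds 0) := by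
    intro φ
    have ha : Tendsto (fun k => (inner ℂ φ (X (nf k)) : ℂ)) atTop (nhds (inner ℂ φ z)) :=
      (hWCX φ).comp hnf_tend
    have hb : Tendsto (fun k => (inner ℂ φ (X (mf k)) : ℂ)) atTop (nhds (inner ℂ φ z)) :=
      (hWCX φ).comp hmf_tend
    have hab := ha.sub hb
    rw [sub_self] at hab
    exact hab.congr fun k => by rw [hζdef]; rw [inner_sub_right]
  have hζin : Tendsto (fun k => (inner ℂ (X (nf k)) (X (mf k)) : ℂ)) atTop
      (nhds (((‖z‖ : ℂ)) ^ 2)) := by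
    rw [← tendsto_sub_nhds_zero_iff]
    apply squeeze_zero_norm (fun k => le_of_lt (hnm k))
    have := hone.const_mul 2
    simpa [div_eq_mul_inv] using this
  have hζre : Tendsto (fun k => ((inner ℂ (X (nf k)) (X (mf k)) : ℂ)).re) atTop
      (nhds (‖z‖ ^ 2)) := by
    have := (Complex.continuous_re.tendsto _).comp hζin
    have heq : (((‖z‖ : ℂ)) ^ 2).re = ‖z‖ ^ 2 := by
      rw [← Complex.ofReal_pow, Complex.ofReal_re]
    rw [← heq]
    simpa [Function.comp_def] using this
  have hζnsq : Tendsto (fun k => ‖ζ k‖ ^ 2) atTop (nhds (2 * α)) := by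
    have hid : ∀ k, ‖ζ k‖ ^ 2 = 2 - 2 * ((inner ℂ (X (nf k)) (X (mf k)) : ℂ)).re := by
      intro k
      rw [hζdef]
      rw [← hre_self, hre_subl, hre_subr, hre_subr, hre_self, hre_self, hXn, hXn,
        hre_symm (X (mf k)) (X (nf k))]
      ring
    simp only [hid]
    have := (tendsto_const_nhds (x := (2:ℝ))).sub (hζre.const_mul 2)
    have heq : 2 * α = 2 - 2 * ‖z‖ ^ 2 := by rw [hαdef]; ring
    rw [heq]
    exact this
  have hζB : Tendsto (fun k => B (ζ k) (ζ k)) atTop (nhds 0) := by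
    refine squeeze_zero (g := fun k : ℕ => 4 / (k + 1 : ℝ)) (fun k => hBpos _ (hζD k)) ?_ ?_
    · intro k
      have hδ : (0 : ℝ) ≤ 1 / (k + 1 : ℝ) := by positivity
      have hab := hBoff _ (hXD (nf k)) _ (hXD (mf k)) (1 / (k + 1 : ℝ)) hδ
        (le_of_lt (hBn k)) (le_of_lt (hBm k))
      have hexp : B (ζ k) (ζ k) = B (X (nf k)) (X (nf k))
          - 2 * B (X (nf k)) (X (mf k)) + B (X (mf k)) (X (mf k)) := by
        rw [hζdef, hBsubl, hBsubr, hBsubr, hBsymm (X (mf k)) (X (nf k))]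
        ring
      show B (ζ k) (ζ k) ≤ 4 / ((k : ℝ) + 1)
      rw [hexp]
      have habs := abs_le.mp hab
      have h1 := hBn k
      have h2 := hBm k
      have h44 : (4:ℝ) / ((k : ℝ) + 1) = 1/((k:ℝ)+1) + 2 * (1/((k:ℝ)+1)) + 1/((k:ℝ)+1) := by
        ring
      rw [h44]
      linarith [habs.1, habs.2]
    · have := hone.const_mul 4
      simpa [div_eq_mul_inv] using this
  have hζq : Tendsto (fun k => q (ζ k) (ζ k)) atTop (nhds (E * (2 * α))) := by
    simp only [hBqq]
    have := hζB.add ((hζnsq.const_mul E))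
    simpa [mul_comm] using this
  -- dichotomy
  rcases eq_or_lt_of_le hα0 with hαeq | hαpos
  · -- α = 0 : strong convergence, ground state exists
    have hz2 : ‖z‖ ^ 2 = 1 := by
      rw [hαdef] at hαeq; linarith
    have hz1 : ‖z‖ = 1 := by
      have h := Real.sqrt_sq (norm_nonneg z)
      rw [hz2, Real.sqrt_one] at h
      exact h.symm
    have hre2 : Tendsto (fun k => ((inner ℂ (X k) z : ℂ)).re) atTop (nhds (‖z‖ ^ 2)) := by
      have := (Complex.continuous_re.tendsto _).comp h2
      have heq : (((‖z‖ : ℂ)) ^ 2).re = ‖z‖ ^ 2 := by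
        rw [← Complex.ofReal_pow, Complex.ofReal_re]
      rw [← heq]
      simpa [Function.comp_def] using this
    have hXz : Tendsto (fun k => ‖X k - z‖ ^ 2) atTop (nhds 0) := by
      have hid : ∀ k, ‖X k - z‖ ^ 2 = 1 - 2 * ((inner ℂ (X k) z : ℂ)).re + ‖z‖ ^ 2 := by
        intro k
        rw [← hre_self, hre_subl, hre_subr, hre_subr, hre_self, hre_self, hXn,
          hre_symm z (X k)]
        ring
      simp only [hid]
      have h3 := ((tendsto_const_nhds (x := (1:ℝ))).sub (hre2.const_mul 2)).add
        (tendsto_const_nhds (x := ‖z‖ ^ 2))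
      have heq : (0:ℝ) = 1 - 2 * ‖z‖ ^ 2 + ‖z‖ ^ 2 := by rw [hz2]; ring
      rw [heq]
      exact h3
    have hXz' : Tendsto X atTop (nhds z) := by
      rw [tendsto_iff_norm_sub_tendsto_zero]
      have hsq : Tendsto (fun k => Real.sqrt (‖X k - z‖ ^ 2)) atTop (nhds (Real.sqrt 0)) :=
        (Real.continuous_sqrt.tendsto _).comp hXz
      rw [Real.sqrt_zero] at hsq
      exact hsq.congr fun k => Real.sqrt_sq (norm_nonneg _)
    have hqc : ∀ ε > 0, ∃ N, ∀ i ≥ N, ∀ j ≥ N, q (X i - X j) (X i - X j) < ε := by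
      intro ε hε
      obtain ⟨N1, hN1⟩ := Metric.tendsto_atTop.mp hXB (ε / 8) (by linarith)
      obtain ⟨N2, hN2⟩ := Metric.cauchySeq_iff.mp hXz'.cauchySeq
        (min 1 (ε / (4 * (|E| + 1)))) (by positivity)
      refine ⟨max N1 N2, fun i hi j hj => ?_⟩
      have hBi : B (X i) (X i) < ε / 8 := by
        have := hN1 i (le_trans (le_max_left _ _) hi)
        rw [Real.dist_eq, sub_zero, abs_of_nonneg (hXB0 i)] at this
        exact this
      have hBj : B (X j) (X j) < ε / 8 := by
        have := hN1 j (le_trans (le_max_left _ _) hj)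
        rw [Real.dist_eq, sub_zero, abs_of_nonneg (hXB0 j)] at this
        exact this
      have hab := hBoff _ (hXD i) _ (hXD j) (ε / 8) (by linarith)
        (le_of_lt hBi) (le_of_lt hBj)
      have habs := abs_le.mp hab
      have hBd : B (X i - X j) (X i - X j) ≤ ε / 2 := by
        have hexp : B (X i - X j) (X i - X j) = B (X i) (X i)
            - 2 * B (X i) (X j) + B (X j) (X j) := by
          rw [hBsubl, hBsubr, hBsubr, hBsymm (X j) (X i)]
          ring
        rw [hexp]
        linarith [habs.1, habs.2]
      have hnrm : ‖X i - X j‖ < min 1 (ε / (4 * (|E| + 1))) := by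
        have := hN2 i (le_trans (le_max_right _ _) hi) j (le_trans (le_max_right _ _) hj)
        rwa [dist_eq_norm] at this
      have hn1 : ‖X i - X j‖ < 1 := lt_of_lt_of_le hnrm (min_le_left _ _)
      have hn2 : ‖X i - X j‖ < ε / (4 * (|E| + 1)) := lt_of_lt_of_le hnrm (min_le_right _ _)
      have hnn : (0:ℝ) ≤ ‖X i - X j‖ := norm_nonneg _
      have hE1 : (0:ℝ) < |E| + 1 := by positivity
      have hEb : E * ‖X i - X j‖ ^ 2 ≤ ε / 4 := by
        have h1 : E * ‖X i - X j‖ ^ 2 ≤ |E| * ‖X i - X j‖ ^ 2 :=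
          mul_le_mul_of_nonneg_right (le_abs_self E) (sq_nonneg _)
        have h2' : |E| * ‖X i - X j‖ ^ 2 ≤ (|E| + 1) * ‖X i - X j‖ ^ 2 :=
          mul_le_mul_of_nonneg_right (le_add_of_nonneg_right zero_le_one) (sq_nonneg _)
        have h3 : (|E| + 1) * ‖X i - X j‖ ^ 2 ≤ (|E| + 1) * (1 * (ε / (4 * (|E| + 1)))) := by
          apply mul_le_mul_of_nonneg_left _ (le_of_lt hE1)
          rw [pow_two]
          apply mul_le_mul (le_of_lt hn1) (le_of_lt hn2) hnn (by linarith)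
        have h4 : (|E| + 1) * (1 * (ε / (4 * (|E| + 1)))) = ε / 4 := by
          field_simp
        linarith
      rw [hBqq]
      calc B (X i - X j) (X i - X j) + E * ‖X i - X j‖ ^ 2 ≤ ε / 2 + ε / 4 :=
            add_le_add hBd hEb
        _ < ε := by linarith only [hε]
    obtain ⟨hzD, hqconv⟩ := hclosed X z hXD hXz' hqc
    have hBdiff : Tendsto (fun k => B (X k - z) (X k - z)) atTop (nhds 0) := by
      have hid : ∀ k, B (X k - z) (X k - z)
          = q (X k - z) (X k - z) - E * ‖X k - z‖ ^ 2 := by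
        intro k
        rw [hBqq]; ring
      simp only [hid]
      simpa using hqconv.sub (hXz.const_mul E)
    have hcross : Tendsto (fun k => B z (X k - z)) atTop (nhds 0) := by
      have hsq : ∀ k, (B z (X k - z)) ^ 2 ≤ B z z * B (X k - z) (X k - z) :=
        fun k => hBCS z hzD _ (D.sub_mem (hXD k) hzD)
      have habs : Tendsto (fun k => (B z (X k - z)) ^ 2) atTop (nhds 0) :=
        squeeze_zero (fun k => sq_nonneg _) hsq (by simpa using hBdiff.const_mul (B z z))
      have h1 : Tendsto (fun k => |B z (X k - z)|) atTop (nhds 0) := by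
        have hs : Tendsto (fun k => Real.sqrt ((B z (X k - z)) ^ 2)) atTop
            (nhds (Real.sqrt 0)) := (Real.continuous_sqrt.tendsto _).comp habs
        rw [Real.sqrt_zero] at hs
        exact hs.congr fun k => Real.sqrt_sq_eq_abs _
      have hneg : Tendsto (fun k => -|B z (X k - z)|) atTop (nhds 0) := by
        simpa using h1.neg
      exact tendsto_of_tendsto_of_tendsto_of_le_of_le hneg h1
        (fun k => neg_abs_le _) (fun k => le_abs_self _)
    have hBzz : B z z = 0 := by
      have hid : ∀ k, B (X k) (X k)
          = B z z + 2 * B z (X k - z) + B (X k - z) (X k - z) := by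
        intro k
        have hXk : z + (X k - z) = X k := by abel
        calc B (X k) (X k) = B (z + (X k - z)) (z + (X k - z)) := by rw [hXk]
          _ = _ := by
              rw [hBaddl, hBaddr, hBaddr, hBsymm (X k - z) z]
              ring
      have h1 : Tendsto (fun k => B z z + 2 * B z (X k - z) + B (X k - z) (X k - z))
          atTop (nhds (B z z)) := by
        have := (tendsto_const_nhds (x := B z z)).add ((hcross.const_mul 2).add hBdiff)
        simpa [add_assoc] using this
      have h2' : Tendsto (fun k => B (X k) (X k)) atTop (nhds (B z z)) := by
        simp only [hid]; exact h1
      exact tendsto_nhds_unique h2' hXB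
    refine ⟨z, hzD, hz1, ?_⟩
    rw [hBqq, hBzz, hz1]
    ring
  · -- α > 0 : contradiction with the weak gap hypothesis
    exfalso
    have hev : ∀ᶠ k in atTop, α < ‖ζ k‖ ^ 2 :=
      hζnsq.eventually (eventually_gt_nhds (by linarith))
    obtain ⟨N, hN⟩ := eventually_atTop.mp hev
    have hζpos : ∀ k : ℕ, 0 < ‖ζ (k + N)‖ := by
      intro k
      have h := hN (k + N) (Nat.le_add_left N k)
      nlinarith [norm_nonneg (ζ (k + N))]
    set χ : ℕ → H := fun k => ((‖ζ (k + N)‖⁻¹ : ℝ) : ℂ) • ζ (k + N) with hχdef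
    have hχD : ∀ k, χ k ∈ D := fun k => D.smul_mem _ (hζD _)
    have hχn : ∀ k, ‖χ k‖ = 1 := by
      intro k
      rw [hχdef]
      simp only [norm_smul, Complex.norm_real, Real.norm_eq_abs]
      rw [abs_of_pos (inv_pos.mpr (hζpos k)), inv_mul_cancel₀ (ne_of_gt (hζpos k))]
    have hsqrtα : 0 < Real.sqrt α := Real.sqrt_pos.mpr hαpos
    have hζlb : ∀ k, Real.sqrt α ≤ ‖ζ (k + N)‖ := by
      intro k
      have h := hN (k + N) (Nat.le_add_left N k)
      calc Real.sqrt α ≤ Real.sqrt (‖ζ (k + N)‖ ^ 2) := Real.sqrt_le_sqrt (le_of_lt h)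
        _ = ‖ζ (k + N)‖ := by rw [Real.sqrt_sq (norm_nonneg _)]
    have hχweak : ∀ φ : H, Tendsto (fun k => (inner ℂ φ (χ k) : ℂ)) atTop (nhds 0) := by
      intro φ
      have hb : Tendsto (fun k => ‖(inner ℂ φ (ζ (k + N)) : ℂ)‖) atTop (nhds 0) := by
        have := ((hζweak φ).comp (tendsto_add_atTop_nat N)).norm
        simpa [Function.comp] using this
      apply squeeze_zero_norm (a := fun k : ℕ => (Real.sqrt α)⁻¹ * ‖(inner ℂ φ (ζ (k + N)) : ℂ)‖)
      · intro k
        rw [hχdef]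
        simp only [inner_smul_right, norm_mul]
        have h1 : ‖((‖ζ (k + N)‖⁻¹ : ℝ) : ℂ)‖ = ‖ζ (k + N)‖⁻¹ := by
          rw [Complex.norm_real, Real.norm_eq_abs, abs_of_pos (inv_pos.mpr (hζpos k))]
        rw [h1]
        apply mul_le_mul_of_nonneg_right _ (norm_nonneg _)
        exact inv_anti₀ hsqrtα (hζlb k)
      · simpa using hb.const_mul (Real.sqrt α)⁻¹
    have hχq : Tendsto (fun k => q (χ k) (χ k)) atTop (nhds E) := by
      have hidq : ∀ k, q (χ k) (χ k) = (‖ζ (k + N)‖ ^ 2)⁻¹ * q (ζ (k + N)) (ζ (k + N)) := by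
        intro k
        rw [hχdef, hsmull, hsmulr, pow_two, mul_inv]
        ring
      simp only [hidq]
      have h1 : Tendsto (fun k => (‖ζ (k + N)‖ ^ 2)⁻¹) atTop (nhds (2 * α)⁻¹) := by
        have := (hζnsq.comp (tendsto_add_atTop_nat N)).inv₀ (by positivity)
        simpa [Function.comp] using this
      have h2' : Tendsto (fun k => q (ζ (k + N)) (ζ (k + N))) atTop (nhds (E * (2 * α))) := by
        have := hζq.comp (tendsto_add_atTop_nat N)
        simpa [Function.comp_def] using this
      have h3 := h1.mul h2'
      have heq : (2 * α)⁻¹ * (E * (2 * α)) = E := by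
        field_simp
      rw [heq] at h3
      exact h3
    have hfalse := hweak χ hχD hχn hχweak
    rw [hχq.liminf_eq] at hfalse
    exact lt_irrefl E hfalse
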